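/- Let Λ be a real p×d matrix with full rank d, μ a probability measure on (0,∞) with ∫₀^∞ w^{−d/2} dμ(w) < ∞, and ρ > 0. Define h(x) = (2π)^{−d/2} det(ΛᵀΛ)^{1/2} ∫₀^∞ w^{−d/2} exp(−xᵀ(ΛᵀΛ)x/(2w)) dμ(w), K_0(x) = ρ h(x)/h(0), and φ(x) = (ρ/h(0)) ∫₀^∞ exp(−2π² w · xᵀ(ΛᵀΛ)^{−1}x) dμ(w). Then both K_0 and φ are integrable over ℝ^d (i.e., K_0 ∈ L¹(ℝ^d) and φ ∈ L¹(ℝ^d)). -/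

import Mathlib

open MeasureTheory Matrix Real

private lemma dot_self_nonneg {d : ℕ} (v : Fin d → ℝ) : 0 ≤ v ⬝ᵥ v :=
  Finset.sum_nonneg fun i _ => mul_self_nonneg _

private lemma quad_cont {d : ℕ} (M : Matrix (Fin d) (Fin d) ℝ) :
    Continuous fun x : Fin d → ℝ => x ⬝ᵥ M *ᵥ x := by
  simp only [dotProduct, mulVec]
  exact continuous_finset_sum _ fun i _ =>
    (continuous_apply i).mul (continuous_finset_sum _ fun j _ =>
      (continuous_const.mul (continuous_apply j)))

private lemma posdef_lb {d : ℕ} (hd : 1 ≤ d) {M : Matrix (Fin d) (Fin d) ℝ} (hM : M.PosDef) :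
    ∃ c : ℝ, 0 < c ∧ ∀ x : Fin d → ℝ, c * (x ⬝ᵥ x) ≤ x ⬝ᵥ M *ᵥ x := by
  haveI : Nonempty (Fin d) := ⟨⟨0, hd⟩⟩
  haveI : Nontrivial (Fin d → ℝ) := ⟨⟨0, 1, fun hcon => by simpa using congrFun hcon ⟨0, hd⟩⟩⟩
  obtain ⟨x₀, hx₀s, hx₀min⟩ := (isCompact_sphere (0 : Fin d → ℝ) 1).exists_isMinOn
    (NormedSpace.sphere_nonempty.mpr zero_le_one) (quad_cont M).continuousOn
  have hx₀norm : ‖x₀‖ = 1 := mem_sphere_zero_iff_norm.mp hx₀s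
  have hx₀ne : x₀ ≠ 0 := by
    intro hcon; rw [hcon] at hx₀norm; simp at hx₀norm
  set c₀ := x₀ ⬝ᵥ M *ᵥ x₀ with hc₀
  have hc₀pos : 0 < c₀ := by
    have := hM.dotProduct_mulVec_pos hx₀ne
    simpa using this
  have hdpos : (0:ℝ) < d := by exact_mod_cast hd
  refine ⟨c₀ / d, div_pos hc₀pos hdpos, fun x => ?_⟩
  rcases eq_or_ne x 0 with rfl | hx
  · simp
  · set r := ‖x‖ with hr
    have hrpos : 0 < r := norm_pos_iff.mpr hx
    have humem : r⁻¹ • x ∈ Metric.sphere (0 : Fin d → ℝ) 1 := by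
      rw [mem_sphere_zero_iff_norm, norm_smul, norm_inv, norm_norm, ← hr,
        inv_mul_cancel₀ hrpos.ne']
    have h1 : c₀ ≤ (r⁻¹ • x) ⬝ᵥ M *ᵥ (r⁻¹ • x) := hx₀min humem
    have h2 : (r⁻¹ • x) ⬝ᵥ M *ᵥ (r⁻¹ • x) = r⁻¹ * r⁻¹ * (x ⬝ᵥ M *ᵥ x) := by
      rw [mulVec_smul, smul_dotProduct, dotProduct_smul]
      simp [smul_eq_mul]; ring
    rw [h2] at h1
    have h3 : c₀ * (r * r) ≤ x ⬝ᵥ M *ᵥ x :=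
      calc c₀ * (r * r) ≤ r⁻¹ * r⁻¹ * (x ⬝ᵥ M *ᵥ x) * (r * r) :=
            mul_le_mul_of_nonneg_right h1 (by positivity)
        _ = (x ⬝ᵥ M *ᵥ x) * (r⁻¹ * r) * (r⁻¹ * r) := by ring
        _ = x ⬝ᵥ M *ᵥ x := by rw [inv_mul_cancel₀ hrpos.ne']; ring
    have h4 : x ⬝ᵥ x ≤ d * (r * r) := by
      calc x ⬝ᵥ x = ∑ i, x i * x i := rfl
        _ ≤ ∑ _i : Fin d, r * r := by
            refine Finset.sum_le_sum fun i _ => ?_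
            have hxi : |x i| ≤ r := by
              simpa using norm_le_pi_norm x i
            calc x i * x i = |x i| * |x i| := (abs_mul_abs_self _).symm
              _ ≤ r * r := mul_le_mul hxi hxi (abs_nonneg _) hrpos.le
        _ = d * (r * r) := by simp [Finset.sum_const, Finset.card_univ, nsmul_eq_mul]
    calc c₀ / d * (x ⬝ᵥ x) ≤ c₀ / d * (d * (r * r)) :=
          mul_le_mul_of_nonneg_left h4 (by positivity)
      _ = c₀ * (r * r) := by field_simp
      _ ≤ x ⬝ᵥ M *ᵥ x := h3

private lemma gauss_eq {d : ℕ} (b : ℝ) :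
    (fun x : Fin d → ℝ => Real.exp (-(b * (x ⬝ᵥ x)))) =
      fun x => ∏ i, Real.exp (-b * x i ^ 2) := by
  funext x
  rw [← Real.exp_sum]
  congr 1
  simp only [dotProduct, Finset.mul_sum, ← Finset.sum_neg_distrib]
  exact (Finset.sum_congr rfl fun i _ => by ring).symm

private lemma gauss_integrable {d : ℕ} {b : ℝ} (hb : 0 < b) :
    Integrable (fun x : Fin d → ℝ => Real.exp (-(b * (x ⬝ᵥ x)))) volume := by
  rw [gauss_eq]
  exact Integrable.fintype_prod (f := fun _ t => Real.exp (-b * t ^ 2))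
    fun i => integrable_exp_neg_mul_sq hb

private lemma gauss_integral {d : ℕ} {b : ℝ} (hb : 0 < b) :
    ∫ x : Fin d → ℝ, Real.exp (-(b * (x ⬝ᵥ x))) = Real.sqrt (π / b) ^ d := by
  rw [gauss_eq]
  rw [integral_fintype_prod_volume_eq_pow (ι := Fin d) (fun t : ℝ => Real.exp (-b * t ^ 2))]
  rw [integral_gaussian b, Fintype.card_fin]

private lemma key {d : ℕ} (hd : 1 ≤ d) {M : Matrix (Fin d) (Fin d) ℝ} (hM : M.PosDef)
    (μ : Measure ℝ) [SFinite μ] (hw : ∀ᵐ w ∂μ, 0 < w)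
    (a b : ℝ → ℝ) (ham : Measurable a) (hbm : Measurable b)
    (hbpos : ∀ w, 0 < w → 0 < b w)
    (hbound : ∀ c : ℝ, 0 < c →
      Integrable (fun w => |a w| * Real.sqrt (π / (c * b w)) ^ d) μ) :
    Integrable (fun x : Fin d → ℝ =>
      ∫ w, a w * Real.exp (-(b w * (x ⬝ᵥ M *ᵥ x))) ∂μ) volume := by
  obtain ⟨c, hc, hq⟩ := posdef_lb hd hM
  set f : (Fin d → ℝ) × ℝ → ℝ :=
    fun q => a q.2 * Real.exp (-(b q.2 * (q.1 ⬝ᵥ M *ᵥ q.1))) with hf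
  have hfm : Measurable f :=
    (ham.comp measurable_snd).mul (Real.measurable_exp.comp
      (((hbm.comp measurable_snd).mul ((quad_cont M).measurable.comp measurable_fst)).neg))
  have hmeas : AEStronglyMeasurable f ((volume : Measure (Fin d → ℝ)).prod μ) :=
    hfm.aestronglyMeasurable
  have hint : Integrable f ((volume : Measure (Fin d → ℝ)).prod μ) := by
    rw [integrable_prod_iff' hmeas]
    constructor
    · filter_upwards [hw] with w hwpos
      have hbw := hbpos w hwpos
      have hg : Integrable (fun x : Fin d → ℝ => Real.exp (-(c * b w * (x ⬝ᵥ x)))) volume :=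
        gauss_integrable (mul_pos hc hbw)
      have hexp : Integrable (fun x : Fin d → ℝ =>
          Real.exp (-(b w * (x ⬝ᵥ M *ᵥ x)))) volume := by
        refine hg.mono' ?_ ?_
        · exact (Real.continuous_exp.comp
            ((continuous_const.mul (quad_cont M)).neg)).aestronglyMeasurable
        · filter_upwards with x
          rw [Real.norm_eq_abs, abs_of_pos (Real.exp_pos _)]
          refine Real.exp_le_exp.mpr (neg_le_neg ?_)
          have := mul_le_mul_of_nonneg_left (hq x) hbw.le
          nlinarith [this]
      exact hexp.const_mul (a w)
    · refine (hbound c hc).mono'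
        ((hfm.norm.stronglyMeasurable.integral_prod_left').aestronglyMeasurable) ?_
      filter_upwards [hw] with w hwpos
      have hbw := hbpos w hwpos
      have hg : Integrable (fun x : Fin d → ℝ => Real.exp (-(c * b w * (x ⬝ᵥ x)))) volume :=
        gauss_integrable (mul_pos hc hbw)
      have hexp : Integrable (fun x : Fin d → ℝ =>
          Real.exp (-(b w * (x ⬝ᵥ M *ᵥ x)))) volume := by
        refine hg.mono' ?_ ?_
        · exact (Real.continuous_exp.comp
            ((continuous_const.mul (quad_cont M)).neg)).aestronglyMeasurable
        · filter_upwards with x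
          rw [Real.norm_eq_abs, abs_of_pos (Real.exp_pos _)]
          refine Real.exp_le_exp.mpr (neg_le_neg ?_)
          have := mul_le_mul_of_nonneg_left (hq x) hbw.le
          nlinarith [this]
      have hle : (∫ x : Fin d → ℝ, ‖f (x, w)‖) ≤ |a w| * Real.sqrt (π / (c * b w)) ^ d := by
        have h1 : ∀ x : Fin d → ℝ,
            ‖f (x, w)‖ = |a w| * Real.exp (-(b w * (x ⬝ᵥ M *ᵥ x))) := by
          intro x
          rw [hf]
          simp [abs_mul, abs_of_pos (Real.exp_pos _)]
        calc (∫ x : Fin d → ℝ, ‖f (x, w)‖)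
            = ∫ x : Fin d → ℝ, |a w| * Real.exp (-(b w * (x ⬝ᵥ M *ᵥ x))) := by
              simp_rw [h1]
          _ = |a w| * ∫ x : Fin d → ℝ, Real.exp (-(b w * (x ⬝ᵥ M *ᵥ x))) :=
              integral_const_mul _ _
          _ ≤ |a w| * ∫ x : Fin d → ℝ, Real.exp (-(c * b w * (x ⬝ᵥ x))) := by
              refine mul_le_mul_of_nonneg_left ?_ (abs_nonneg _)
              refine integral_mono_of_nonneg ?_ hg ?_
              · filter_upwards with x; positivity
              · filter_upwards with x
                refine Real.exp_le_exp.mpr (neg_le_neg ?_)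
                have := mul_le_mul_of_nonneg_left (hq x) hbw.le
                nlinarith [this]
          _ = |a w| * Real.sqrt (π / (c * b w)) ^ d := by
              rw [gauss_integral (mul_pos hc hbw)]
      rw [Real.norm_eq_abs, abs_of_nonneg (integral_nonneg fun x => norm_nonneg _)]
      exact hle
  exact hint.integral_prod_left

private lemma sqrt_pow_eq {w : ℝ} (hw : 0 < w) (d : ℕ) :
    Real.sqrt w ^ d = w ^ ((d : ℝ) / 2) := by
  rw [Real.sqrt_eq_rpow, ← Real.rpow_natCast (w ^ ((1:ℝ)/2)) d, ← Real.rpow_mul hw.le]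
  congr 1
  ring

private lemma posdef_tm {p d : ℕ} (Λ : Matrix (Fin p) (Fin d) ℝ) (hΛ : Λ.rank = d) :
    (Λᵀ * Λ).PosDef := by
  have hr : (Λᵀ * Λ).rank = d := by rw [Matrix.rank_transpose_mul_self]; exact hΛ
  rw [Matrix.rank] at hr
  have hrange : LinearMap.range (Λᵀ * Λ).mulVecLin = ⊤ := by
    apply Submodule.eq_top_of_finrank_eq
    rw [hr, Module.finrank_fintype_fun_eq_card, Fintype.card_fin]
  have hsurj : Function.Surjective (Λᵀ * Λ).mulVecLin := LinearMap.range_eq_top.mp hrange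
  have hinj : Function.Injective (Λᵀ * Λ).mulVecLin :=
    LinearMap.injective_iff_surjective.mpr hsurj
  refine Matrix.PosDef.of_dotProduct_mulVec_pos ?_ fun x hx => ?_
  · have := Matrix.isHermitian_conjTranspose_mul_self Λ
    rwa [Matrix.conjTranspose_eq_transpose_of_trivial] at this
  · have hAx : (Λᵀ * Λ) *ᵥ x ≠ 0 := by
      intro h0
      apply hx
      apply hinj
      rw [map_zero]
      exact (Matrix.mulVecLin_apply _ _).trans h0
    have hΛx : Λ *ᵥ x ≠ 0 := by
      intro h0
      apply hAx
      rw [← Matrix.mulVec_mulVec, h0, Matrix.mulVec_zero]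
    have hkey : x ⬝ᵥ (Λᵀ * Λ) *ᵥ x = (Λ *ᵥ x) ⬝ᵥ (Λ *ᵥ x) := by
      rw [← Matrix.mulVec_mulVec, Matrix.dotProduct_mulVec, Matrix.vecMul_transpose]
    simp only [star_trivial]
    rw [hkey]
    exact lt_of_le_of_ne (dot_self_nonneg _) (Ne.symm (mt dotProduct_self_eq_zero.mp hΛx))

theorem stmt2 (p d : ℕ) (hd : 1 ≤ d) (hdp : d ≤ p)
    (Λ : Matrix (Fin p) (Fin d) ℝ) (hΛ : Λ.rank = d)
    (μ : Measure ℝ) [IsProbabilityMeasure μ] (hμ : μ (Set.Iic 0) = 0)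
    (hint : Integrable (fun w : ℝ => w ^ (-(d : ℝ) / 2)) μ)
    (ρ : ℝ) (hρ : 0 < ρ)
    (h : (Fin d → ℝ) → ℝ)
    (hh : h = fun x =>
      (2 * π) ^ (-(d : ℝ) / 2) * Real.sqrt (Λᵀ * Λ).det *
        ∫ w, w ^ (-(d : ℝ) / 2) * Real.exp (-(x ⬝ᵥ ((Λᵀ * Λ) *ᵥ x)) / (2 * w)) ∂μ)
    (K₀ : (Fin d → ℝ) → ℝ) (hK₀ : K₀ = fun x => ρ * h x / h 0)
    (φ : (Fin d → ℝ) → ℝ)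
    (hφ : φ = fun x =>
      (ρ / h 0) * ∫ w, Real.exp (-(2 * π ^ 2 * w * (x ⬝ᵥ ((Λᵀ * Λ)⁻¹ *ᵥ x)))) ∂μ) :
    Integrable K₀ (volume : Measure (Fin d → ℝ)) ∧
      Integrable φ (volume : Measure (Fin d → ℝ)) := by
  have hwpos : ∀ᵐ w ∂μ, 0 < w := by
    rw [ae_iff]
    have hs : {w : ℝ | ¬ 0 < w} = Set.Iic 0 := by ext w; simp [not_lt]
    rw [hs]; exact hμ
  have hMpd : (Λᵀ * Λ).PosDef := posdef_tm Λ hΛ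
  have hMinv : ((Λᵀ * Λ)⁻¹).PosDef := hMpd.inv
  -- K₀ part
  have haK : Measurable fun w : ℝ => Real.exp (Real.log w * (-(d : ℝ) / 2)) :=
    Real.measurable_exp.comp (Real.measurable_log.mul measurable_const)
  have hbK : Measurable fun w : ℝ => (2 * w)⁻¹ := (measurable_id.const_mul 2).inv
  have hbKpos : ∀ w : ℝ, 0 < w → 0 < (2 * w)⁻¹ := fun w hw => by positivity
  have hbdK : ∀ c : ℝ, 0 < c → Integrable (fun w =>
      |Real.exp (Real.log w * (-(d : ℝ) / 2))| * Real.sqrt (π / (c * (2 * w)⁻¹)) ^ d) μ := by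
    intro c hc
    refine (integrable_const (Real.sqrt (2 * π / c) ^ d)).congr ?_
    filter_upwards [hwpos] with w hw
    rw [abs_of_pos (Real.exp_pos _), ← Real.rpow_def_of_pos hw]
    have h2 : π / (c * (2 * w)⁻¹) = (2 * π / c) * w := by
      field_simp
    rw [h2, Real.sqrt_mul (by positivity) w, mul_pow, sqrt_pow_eq hw d]
    have h3 : w ^ (-(d : ℝ) / 2) * w ^ ((d : ℝ) / 2) = 1 := by
      rw [← Real.rpow_add hw, show -(d:ℝ)/2 + (d:ℝ)/2 = 0 by ring, Real.rpow_zero]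
    calc Real.sqrt (2 * π / c) ^ d
        = (w ^ (-(d : ℝ) / 2) * w ^ ((d : ℝ) / 2)) * Real.sqrt (2 * π / c) ^ d := by
          rw [h3, one_mul]
      _ = w ^ (-(d : ℝ) / 2) * (Real.sqrt (2 * π / c) ^ d * w ^ ((d : ℝ) / 2)) := by ring
  have hKkey := key hd hMpd μ hwpos _ _ haK hbK hbKpos hbdK
  have hGK : Integrable (fun x : Fin d → ℝ =>
      ∫ w, w ^ (-(d : ℝ) / 2) * Real.exp (-(x ⬝ᵥ ((Λᵀ * Λ) *ᵥ x)) / (2 * w)) ∂μ) volume := by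
    refine hKkey.congr (Filter.Eventually.of_forall fun x => ?_)
    refine integral_congr_ae ?_
    filter_upwards [hwpos] with w hw
    rw [← Real.rpow_def_of_pos hw]
    congr 1
    congr 1
    rw [div_eq_inv_mul]
    ring
  have hhI : Integrable h volume := by
    rw [hh]; exact hGK.const_mul _
  have hK₀i : Integrable K₀ volume := by
    rw [hK₀]; exact (hhI.const_mul ρ).div_const (h 0)
  -- φ part
  have haφ : Measurable fun _ : ℝ => (1 : ℝ) := measurable_const
  have hbφ : Measurable fun w : ℝ => 2 * π ^ 2 * w := measurable_id.const_mul _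
  have hbφpos : ∀ w : ℝ, 0 < w → 0 < 2 * π ^ 2 * w := fun w hw => by positivity
  have hbdφ : ∀ c : ℝ, 0 < c → Integrable (fun w =>
      |(1 : ℝ)| * Real.sqrt (π / (c * (2 * π ^ 2 * w))) ^ d) μ := by
    intro c hc
    refine ((hint.const_mul (Real.sqrt (1 / (2 * π * c)) ^ d)).congr ?_)
    filter_upwards [hwpos] with w hw
    have h2 : π / (c * (2 * π ^ 2 * w)) = (1 / (2 * π * c)) * w⁻¹ := by
      field_simp
    rw [h2, abs_one, one_mul, Real.sqrt_mul (by positivity) _, mul_pow, Real.sqrt_inv,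
      inv_pow, sqrt_pow_eq hw d, ← Real.rpow_neg hw.le, neg_div]
  have hφkey := key hd hMinv μ hwpos _ _ haφ hbφ hbφpos hbdφ
  have hφG : Integrable (fun x : Fin d → ℝ =>
      ∫ w, Real.exp (-(2 * π ^ 2 * w * (x ⬝ᵥ ((Λᵀ * Λ)⁻¹ *ᵥ x)))) ∂μ) volume := by
    simpa only [one_mul] using hφkey
  have hφi : Integrable φ volume := by
    rw [hφ]; exact hφG.const_mul _
  exact ⟨hK₀i, hφi⟩
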